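/- Let I be a finite set, Θ ∈ ℤ^I, and for nonzero β ∈ ℕ^I write s(β) = (Σ_i Θ_i β_i)/(Σ_i β_i) ∈ ℚ. Let r be any function from the nonzero vectors of ℕ^I to ℕ. For nonzero α ∈ ℕ^I define n_α := Σ_u Π_β C(r(β) + u(β) − 1, u(β)), the sum being over all finitely supported functions u from the nonzero vectors of ℕ^I to ℕ with Σ_β u(β)·β = α, the product over all β in the support of u, and C denoting the binomial coefficient; and define m_α by the same sum restricted to those u whose support is contained in {β : s(β) = s(α)}. Then for every nonzero α ∈ ℕ^I: n_α = Σ_D Π_{γ∈D} m_γ, the sum being over all finite sets D of nonzero vectors of ℕ^I whose elements have pairwise distinct slopes and satisfy Σ_{γ∈D} γ = α. (This is the PBW-theorem identity expressing n_α through the slope-homogeneous quantities m_α.) -/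

import Mathlib

open Finset

/-- The slope of a nonzero vector `β ∈ ℕ^I` with respect to `Θ ∈ ℤ^I`:
`s(β) = (∑ Θ_i β_i) / (∑ β_i)`. -/
noncomputable def slopeVec {I : Type*} [Fintype I] (Θ : I → ℤ) (β : I → ℕ) : ℚ :=
  (∑ i, (Θ i : ℚ) * (β i : ℚ)) / (∑ i, (β i : ℚ))

/-- `n_α = ∑_u ∏_β C(r(β) + u(β) − 1, u(β))`, the sum over all finitely supported
functions `u` from the nonzero vectors of `ℕ^I` to `ℕ` with `∑_β u(β)·β = α`. -/
noncomputable def nQty {I : Type*} [Fintype I] (r : (I → ℕ) → ℕ) (α : I → ℕ) : ℕ :=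
  ∑ᶠ u ∈ {u : (I → ℕ) →₀ ℕ |
      u 0 = 0 ∧ (u.sum fun β n => n • β) = α},
    ∏ β ∈ u.support, Nat.choose (r β + u β - 1) (u β)

/-- `m_α`, defined by the same sum as `n_α`, restricted to those `u` whose support is
contained in the set of vectors of the same slope as `α`. -/
noncomputable def mQty {I : Type*} [Fintype I] (Θ : I → ℤ) (r : (I → ℕ) → ℕ)
    (α : I → ℕ) : ℕ :=
  ∑ᶠ u ∈ {u : (I → ℕ) →₀ ℕ |
      u 0 = 0 ∧ (u.sum fun β n => n • β) = α ∧
      ∀ β ∈ u.support, slopeVec Θ β = slopeVec Θ α},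
    ∏ β ∈ u.support, Nat.choose (r β + u β - 1) (u β)

set_option linter.unusedSectionVars false
namespace PBWAux
open Finsupp Classical

variable {I : Type} [Fintype I]

noncomputable def wQty (r : (I → ℕ) → ℕ) (u : (I → ℕ) →₀ ℕ) : ℕ :=
  ∏ β ∈ u.support, Nat.choose (r β + u β - 1) (u β)

def vsum (u : (I → ℕ) →₀ ℕ) : I → ℕ := u.sum fun β n => n • β

theorem vsum_zero : vsum (0 : (I → ℕ) →₀ ℕ) = 0 := by
  simp [vsum]

theorem vsum_add (u v : (I → ℕ) →₀ ℕ) : vsum (u + v) = vsum u + vsum v := by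
  unfold vsum
  exact Finsupp.sum_add_index' (fun β => zero_smul _ _) (fun β m n => add_smul m n β)

theorem vsum_apply (u : (I → ℕ) →₀ ℕ) (i : I) :
    vsum u i = ∑ β ∈ u.support, u β * β i := by
  unfold vsum Finsupp.sum
  rw [Finset.sum_apply]
  rfl

noncomputable def box (α : I → ℕ) : Finset (I → ℕ) := Fintype.piFinset fun i => Finset.range (α i + 1)

theorem mem_box {α β : I → ℕ} : β ∈ box α ↔ ∀ i, β i ≤ α i := by
  simp [box, Nat.lt_succ_iff]

theorem term_le {u : (I → ℕ) →₀ ℕ} {α : I → ℕ} (h : vsum u = α) {β : I → ℕ}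
    (hβ : β ∈ u.support) (i : I) : u β * β i ≤ α i := by
  rw [← h, vsum_apply]
  exact Finset.single_le_sum (f := fun β' => u β' * β' i) (fun _ _ => Nat.zero_le _) hβ

theorem supp_mem_box {u : (I → ℕ) →₀ ℕ} {α : I → ℕ} (h : vsum u = α) {β : I → ℕ}
    (hβ : β ∈ u.support) : β ∈ box α := by
  rw [mem_box]
  intro i
  have h1 := term_le h hβ i
  have h2 : 1 ≤ u β := Nat.one_le_iff_ne_zero.2 (Finsupp.mem_support_iff.1 hβ)
  calc β i = 1 * β i := (one_mul _).symm
    _ ≤ u β * β i := Nat.mul_le_mul_right _ h2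
    _ ≤ α i := h1

theorem val_le {u : (I → ℕ) →₀ ℕ} {α : I → ℕ} (h0 : u 0 = 0) (h : vsum u = α)
    {β : I → ℕ} (hβ : β ∈ u.support) : u β ≤ ∑ i, α i := by
  have hβ0 : β ≠ 0 := by
    intro hh; exact Finsupp.mem_support_iff.1 hβ (hh ▸ h0)
  have : ∃ i, 1 ≤ β i := by
    by_contra hc
    push_neg at hc
    exact hβ0 (funext fun i => Nat.lt_one_iff.1 (hc i))
  obtain ⟨i, hi⟩ := this
  calc u β = u β * 1 := (mul_one _).symm
    _ ≤ u β * β i := Nat.mul_le_mul_left _ hi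
    _ ≤ α i := term_le h hβ i
    _ ≤ ∑ i, α i := Finset.single_le_sum (fun _ _ => Nat.zero_le _) (Finset.mem_univ i)

theorem finite_S (α : I → ℕ) : {u : (I → ℕ) →₀ ℕ | u 0 = 0 ∧ vsum u = α}.Finite := by
  apply Set.Finite.subset (((box α).finsupp fun _ => Finset.range (∑ i, α i + 1)).finite_toSet)
  rintro u ⟨h0, hs⟩
  simp only [Finset.mem_coe, Finset.mem_finsupp_iff]
  refine ⟨fun β hβ => supp_mem_box hs hβ, fun β _ => ?_⟩
  rw [Finset.mem_range, Nat.lt_succ_iff]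
  by_cases hβ : β ∈ u.support
  · exact val_le h0 hs hβ
  · simp [Finsupp.notMem_support_iff.1 hβ]


theorem den_ne_zero {β : I → ℕ} (hβ : β ≠ 0) : (∑ i, (β i : ℚ)) ≠ 0 := by
  have : ∃ i, 1 ≤ β i := by
    by_contra hc
    push_neg at hc
    exact hβ (funext fun i => Nat.lt_one_iff.1 (hc i))
  obtain ⟨i, hi⟩ := this
  have : (0:ℚ) < ∑ i, (β i : ℚ) := by
    apply Finset.sum_pos' (fun j _ => by positivity)
    exact ⟨i, Finset.mem_univ i, by exact_mod_cast hi⟩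
  exact ne_of_gt this

theorem slope_eq_iff (Θ : I → ℤ) {β : I → ℕ} (hβ : β ≠ 0) {s : ℚ} :
    slopeVec Θ β = s ↔ ∑ i, (Θ i : ℚ) * (β i : ℚ) = s * ∑ i, (β i : ℚ) :=
  div_eq_iff (den_ne_zero hβ)

theorem supp_ne_zero {u : (I → ℕ) →₀ ℕ} (h0 : u 0 = 0) {β : I → ℕ}
    (hβ : β ∈ u.support) : β ≠ 0 := by
  intro hh; exact Finsupp.mem_support_iff.1 hβ (hh ▸ h0)

theorem cast_vsum_apply (u : (I → ℕ) →₀ ℕ) (i : I) :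
    ((vsum u i : ℕ) : ℚ) = ∑ β ∈ u.support, (u β : ℚ) * (β i : ℚ) := by
  rw [vsum_apply]; push_cast; rfl

theorem num_vsum (Θ : I → ℤ) (u : (I → ℕ) →₀ ℕ) :
    ∑ i, (Θ i : ℚ) * (vsum u i : ℚ) =
      ∑ β ∈ u.support, (u β : ℚ) * ∑ i, (Θ i : ℚ) * (β i : ℚ) := by
  simp only [cast_vsum_apply, Finset.mul_sum]
  rw [Finset.sum_comm]
  apply Finset.sum_congr rfl
  intro β _
  apply Finset.sum_congr rfl
  intro i _
  ring

theorem den_vsum (u : (I → ℕ) →₀ ℕ) :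
    (∑ i, (vsum u i : ℚ)) = ∑ β ∈ u.support, (u β : ℚ) * ∑ i, (β i : ℚ) := by
  simp only [cast_vsum_apply, Finset.mul_sum]
  rw [Finset.sum_comm]

theorem slope_vsum (Θ : I → ℤ) {u : (I → ℕ) →₀ ℕ} {s : ℚ} (h0 : u 0 = 0)
    (hs : ∀ β ∈ u.support, slopeVec Θ β = s) (hne : vsum u ≠ 0) :
    slopeVec Θ (vsum u) = s := by
  rw [slope_eq_iff Θ hne, num_vsum, den_vsum, Finset.mul_sum]
  apply Finset.sum_congr rfl
  intro β hβ
  have := (slope_eq_iff Θ (supp_ne_zero h0 hβ)).1 (hs β hβ)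
  rw [this]; ring

variable (Θ : I → ℤ)

def SN (Q : Finset ℚ) (α : I → ℕ) : Set ((I → ℕ) →₀ ℕ) :=
  {u | u 0 = 0 ∧ vsum u = α ∧ ∀ β ∈ u.support, slopeVec Θ β ∈ Q}

def SM (s : ℚ) (α : I → ℕ) : Set ((I → ℕ) →₀ ℕ) :=
  {u | u 0 = 0 ∧ vsum u = α ∧ ∀ β ∈ u.support, slopeVec Θ β = s}

def SD (Q : Finset ℚ) (α : I → ℕ) : Set (Finset (I → ℕ)) :=
  {D | 0 ∉ D ∧ (↑D : Set (I → ℕ)).Pairwise (fun β γ => slopeVec Θ β ≠ slopeVec Θ γ) ∧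
    (∀ γ ∈ D, slopeVec Θ γ ∈ Q) ∧ ∑ γ ∈ D, γ = α}

theorem finite_SN (Q : Finset ℚ) (α : I → ℕ) : (SN Θ Q α).Finite :=
  (finite_S α).subset fun u hu => ⟨hu.1, hu.2.1⟩

theorem finite_SM (s : ℚ) (α : I → ℕ) : (SM Θ s α).Finite :=
  (finite_S α).subset fun u hu => ⟨hu.1, hu.2.1⟩

theorem finite_SD (Q : Finset ℚ) (α : I → ℕ) : (SD Θ Q α).Finite := by
  apply Set.Finite.subset ((box α).powerset.finite_toSet)
  intro D hD
  simp only [Finset.mem_coe, Finset.mem_powerset]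
  intro γ hγ
  rw [mem_box]
  intro i
  have : ∑ γ ∈ D, γ i = α i := by
    have := congrFun hD.2.2.2 i
    simpa using this
  rw [← this]
  exact Finset.single_le_sum (f := fun γ : I → ℕ => γ i) (fun _ _ => Nat.zero_le _) hγ

theorem vsum_eq_zero_iff {u : (I → ℕ) →₀ ℕ} (h0 : u 0 = 0) (h : vsum u = 0) : u = 0 := by
  rw [← Finsupp.support_eq_empty, Finset.eq_empty_iff_forall_notMem]
  intro β hβ
  have hβ0 : β ≠ 0 := supp_ne_zero h0 hβ
  have : ∃ i, 1 ≤ β i := by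
    by_contra hc
    push_neg at hc
    exact hβ0 (funext fun i => Nat.lt_one_iff.1 (hc i))
  obtain ⟨i, hi⟩ := this
  have := term_le h hβ i
  simp only [Pi.zero_apply, Nat.le_zero, Nat.mul_eq_zero] at this
  rcases this with h' | h'
  · exact Finsupp.mem_support_iff.1 hβ h'
  · omega

theorem SM_zero (s : ℚ) : SM Θ s 0 = {0} := by
  ext u
  constructor
  · rintro ⟨h0, hv, -⟩
    exact vsum_eq_zero_iff h0 hv
  · rintro rfl
    exact ⟨rfl, vsum_zero, fun β hβ => absurd hβ (by simp)⟩

theorem wQty_zero (r : (I → ℕ) → ℕ) : wQty r 0 = 1 := by simp [wQty]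

theorem wQty_add (r : (I → ℕ) → ℕ) {u v : (I → ℕ) →₀ ℕ}
    (h : Disjoint u.support v.support) : wQty r (u + v) = wQty r u * wQty r v := by
  unfold wQty
  rw [Finsupp.support_add_eq h, Finset.prod_union h]
  congr 1
  · apply Finset.prod_congr rfl
    intro β hβ
    have : v β = 0 := Finsupp.notMem_support_iff.1 (Finset.disjoint_left.1 h hβ)
    simp [this]
  · apply Finset.prod_congr rfl
    intro β hβ
    have : u β = 0 := Finsupp.notMem_support_iff.1 (Finset.disjoint_right.1 h hβ)
    simp [this]

theorem finsum_mem_prod_set {A B : Type} {s : Set A} {t : Set B} (hs : s.Finite)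
    (ht : t.Finite) (f : A → ℕ) (g : B → ℕ) :
    ∑ᶠ p ∈ s ×ˢ t, f p.1 * g p.2 = (∑ᶠ a ∈ s, f a) * (∑ᶠ b ∈ t, g b) := by
  rw [finsum_mem_eq_finite_toFinset_sum _ hs, finsum_mem_eq_finite_toFinset_sum _ ht,
    finsum_mem_eq_finite_toFinset_sum _ (hs.prod ht), ← Set.Finite.toFinset_prod,
    Finset.sum_mul_sum, Finset.sum_product]



def G (s : ℚ) (α : I → ℕ) : Set (I → ℕ) :=
  {γ | γ ≤ α ∧ (γ = 0 ∨ slopeVec Θ γ = s)}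

theorem finite_G (s : ℚ) (α : I → ℕ) : (G Θ s α).Finite := by
  apply Set.Finite.subset (box α).finite_toSet
  intro γ hγ
  simp only [Finset.mem_coe, mem_box]
  exact fun i => hγ.1 i

theorem disj_supports {s : ℚ} {Q : Finset ℚ} (hsQ : s ∉ Q) {u1 u2 : (I → ℕ) →₀ ℕ}
    (h1 : ∀ β ∈ u1.support, slopeVec Θ β = s) (h2 : ∀ β ∈ u2.support, slopeVec Θ β ∈ Q) :
    Disjoint u1.support u2.support := by
  rw [Finset.disjoint_left]
  intro β hβ1 hβ2
  exact hsQ (h1 β hβ1 ▸ h2 β hβ2)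

theorem filter_slope_add {s : ℚ} {Q : Finset ℚ} (hsQ : s ∉ Q) {u1 u2 : (I → ℕ) →₀ ℕ}
    (h1 : ∀ β ∈ u1.support, slopeVec Θ β = s) (h2 : ∀ β ∈ u2.support, slopeVec Θ β ∈ Q)
    [DecidablePred (fun β : I → ℕ => slopeVec Θ β = s)] :
    (u1 + u2).filter (fun β => slopeVec Θ β = s) = u1 := by
  rw [Finsupp.filter_add]
  have e1 : u1.filter (fun β => slopeVec Θ β = s) = u1 :=
    (Finsupp.filter_eq_self_iff _ _).2 fun x hx => h1 x (Finsupp.mem_support_iff.2 hx)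
  have e2 : u2.filter (fun β => slopeVec Θ β = s) = 0 :=
    (Finsupp.filter_eq_zero_iff _ _).2 fun x hpx => by
      by_contra hx
      exact hsQ (hpx ▸ h2 x (Finsupp.mem_support_iff.2 hx))
  rw [e1, e2, add_zero]

theorem stepN (r : (I → ℕ) → ℕ) {s : ℚ} {Q : Finset ℚ} (hsQ : s ∉ Q) (α : I → ℕ) :
    ∑ᶠ u ∈ SN Θ (insert s Q) α, wQty r u
      = ∑ᶠ γ ∈ G Θ s α,
          (∑ᶠ u ∈ SM Θ s γ, wQty r u) * (∑ᶠ u ∈ SN Θ Q (α - γ), wQty r u) := by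
  classical
  set Pset : Set (((I → ℕ) →₀ ℕ) × ((I → ℕ) →₀ ℕ)) :=
    {p | (p.1 0 = 0 ∧ ∀ β ∈ p.1.support, slopeVec Θ β = s) ∧
         (p.2 0 = 0 ∧ ∀ β ∈ p.2.support, slopeVec Θ β ∈ Q) ∧
         vsum p.1 + vsum p.2 = α} with hPset
  have hbij : Set.BijOn (fun p : ((I → ℕ) →₀ ℕ) × ((I → ℕ) →₀ ℕ) => p.1 + p.2)
      Pset (SN Θ (insert s Q) α) := by
    refine ⟨?_, ?_, ?_⟩
    · rintro ⟨u1, u2⟩ ⟨⟨h10, h1s⟩, ⟨h20, h2s⟩, hv⟩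
      refine ⟨by simp [Finsupp.add_apply, h10, h20], by rw [vsum_add]; exact hv, ?_⟩
      intro β hβ
      rcases Finset.mem_union.1 (Finsupp.support_add hβ) with h | h
      · exact Finset.mem_insert.2 (Or.inl (h1s β h))
      · exact Finset.mem_insert.2 (Or.inr (h2s β h))
    · rintro ⟨u1, u2⟩ ⟨⟨h10, h1s⟩, ⟨h20, h2s⟩, hv⟩ ⟨v1, v2⟩ ⟨⟨g10, g1s⟩, ⟨g20, g2s⟩, gv⟩ heq
      simp only at heq
      dsimp only at h10 h1s h20 h2s g10 g1s g20 g2s hv gv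
      have e1 : u1 = v1 := by
        rw [← filter_slope_add Θ hsQ h1s h2s, heq, filter_slope_add Θ hsQ g1s g2s]
      have e2 : u2 = v2 := by
        rw [e1] at heq
        ext a
        have := congrArg (fun f : (I → ℕ) →₀ ℕ => f a) heq
        simp only [Finsupp.add_apply] at this
        omega
      rw [Prod.ext_iff]
      exact ⟨e1, e2⟩
    · rintro u ⟨h0, hv, hQ⟩
      refine ⟨(u.filter (fun β => slopeVec Θ β = s),
               u.filter (fun β => ¬ slopeVec Θ β = s)), ⟨⟨?_, ?_⟩, ⟨?_, ?_⟩, ?_⟩, ?_⟩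
      · rw [Finsupp.filter_apply]; split <;> simp [h0]
      · intro β hβ
        rw [Finsupp.support_filter, Finset.mem_filter] at hβ
        exact hβ.2
      · rw [Finsupp.filter_apply]; split <;> simp [h0]
      · intro β hβ
        rw [Finsupp.support_filter, Finset.mem_filter] at hβ
        rcases Finset.mem_insert.1 (hQ β hβ.1) with h | h
        · exact absurd h hβ.2
        · exact h
      · rw [← vsum_add, Finsupp.filter_pos_add_filter_neg, hv]
      · simp only
        rw [Finsupp.filter_pos_add_filter_neg]
  have h1 : ∑ᶠ p ∈ Pset, wQty r p.1 * wQty r p.2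
      = ∑ᶠ u ∈ SN Θ (insert s Q) α, wQty r u :=
    finsum_mem_eq_of_bijOn _ hbij fun p hp =>
      (wQty_add r (disj_supports Θ hsQ hp.1.2 hp.2.1.2)).symm
  rw [← h1]
  have hunion : Pset = ⋃ γ ∈ G Θ s α, (SM Θ s γ) ×ˢ (SN Θ Q (α - γ)) := by
    ext ⟨u1, u2⟩
    simp only [Set.mem_iUnion, Set.mem_prod, hPset, Set.mem_setOf_eq]
    constructor
    · rintro ⟨⟨h10, h1s⟩, ⟨h20, h2s⟩, hv⟩
      have key : ∀ i, vsum u1 i + vsum u2 i = α i := fun i => by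
        have := congrFun hv i
        simpa using this
      refine ⟨vsum u1, ⟨fun i => ?_, ?_⟩, ⟨h10, rfl, h1s⟩, ⟨h20, ?_, h2s⟩⟩
      · exact Nat.le.intro (key i)
      · by_cases hz : vsum u1 = 0
        · exact Or.inl hz
        · exact Or.inr (slope_vsum Θ h10 h1s hz)
      · funext i
        show vsum u2 i = α i - vsum u1 i
        exact Nat.eq_sub_of_add_eq (by rw [Nat.add_comm]; exact key i)
    · rintro ⟨γ, ⟨hle, -⟩, ⟨h10, h1v, h1s⟩, ⟨h20, h2v, h2s⟩⟩
      refine ⟨⟨h10, h1s⟩, ⟨h20, h2s⟩, ?_⟩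
      rw [h1v, h2v]
      funext i
      show γ i + (α i - γ i) = α i
      exact Nat.add_sub_cancel' (hle i)
  rw [hunion, finsum_mem_biUnion ?pd (finite_G Θ s α)
      (fun γ _ => (finite_SM Θ s γ).prod (finite_SN Θ Q (α - γ)))]
  case pd =>
    intro γ1 _ γ2 _ hne
    simp only [Function.onFun]
    rw [Set.disjoint_left]
    rintro ⟨u1, u2⟩ ⟨⟨-, h1, -⟩, -⟩ ⟨⟨-, h2, -⟩, -⟩
    exact hne (h1 ▸ h2)
  apply finsum_mem_congr rfl
  intro γ _
  exact finsum_mem_prod_set (finite_SM Θ s γ) (finite_SN Θ Q (α - γ)) _ _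


noncomputable def mQty' (r : (I → ℕ) → ℕ) (α : I → ℕ) : ℕ :=
  ∑ᶠ u ∈ {u : (I → ℕ) →₀ ℕ |
      u 0 = 0 ∧ (u.sum fun β n => n • β) = α ∧
      ∀ β ∈ u.support, slopeVec Θ β = slopeVec Θ α},
    ∏ β ∈ u.support, Nat.choose (r β + u β - 1) (u β)

theorem Mfac_zero (r : (I → ℕ) → ℕ) (s : ℚ) :
    ∑ᶠ u ∈ SM Θ s 0, wQty r u = 1 := by
  rw [SM_zero, finsum_mem_singleton, wQty_zero]

theorem Mfac_eq_mQty' (r : (I → ℕ) → ℕ) {s : ℚ} {γ : I → ℕ}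
    (hslope : slopeVec Θ γ = s) :
    ∑ᶠ u ∈ SM Θ s γ, wQty r u = mQty' Θ r γ := by
  have hset : SM Θ s γ = {u : (I → ℕ) →₀ ℕ |
      u 0 = 0 ∧ (u.sum fun β n => n • β) = γ ∧
      ∀ β ∈ u.support, slopeVec Θ β = slopeVec Θ γ} := by
    unfold SM vsum
    rw [hslope]
  rw [mQty', ← hset]
  rfl

theorem elem_le_sum {D : Finset (I → ℕ)} {γ : I → ℕ} (hγ : γ ∈ D) :
    ∀ i, γ i ≤ (∑ δ ∈ D, δ) i := by
  intro i
  have : (∑ δ ∈ D, δ) i = ∑ δ ∈ D, δ i := by simp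
  rw [this]
  exact Finset.single_le_sum (f := fun δ : I → ℕ => δ i) (fun _ _ => Nat.zero_le _) hγ

theorem slope_symm : Symmetric (fun β γ : I → ℕ => slopeVec Θ β ≠ slopeVec Θ γ) :=
  fun _ _ h => Ne.symm h

theorem stepD (r : (I → ℕ) → ℕ) {s : ℚ} {Q : Finset ℚ} (hsQ : s ∉ Q) (α : I → ℕ) :
    ∑ᶠ D ∈ SD Θ (insert s Q) α, ∏ γ ∈ D, mQty' Θ r γ
      = ∑ᶠ γ ∈ G Θ s α,
          (∑ᶠ u ∈ SM Θ s γ, wQty r u) *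
            (∑ᶠ D ∈ SD Θ Q (α - γ), ∏ δ ∈ D, mQty' Θ r δ) := by
  classical
  set PsetD : Set ((I → ℕ) × Finset (I → ℕ)) :=
    {p | p.1 ∈ G Θ s α ∧ p.2 ∈ SD Θ Q (α - p.1)} with hPsetD
  set e : (I → ℕ) × Finset (I → ℕ) → Finset (I → ℕ) :=
    fun p => if p.1 = 0 then p.2 else insert p.1 p.2 with he
  -- slope of a nonzero member of G is s
  have hGslope : ∀ γ ∈ G Θ s α, γ ≠ 0 → slopeVec Θ γ = s := by
    rintro γ ⟨-, h | h⟩ hne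
    · exact absurd h hne
    · exact h
  have hnotmem : ∀ {γ : I → ℕ} {D : Finset (I → ℕ)}, slopeVec Θ γ = s →
      (∀ δ ∈ D, slopeVec Θ δ ∈ Q) → γ ∉ D := by
    intro γ D hγs hD hmem
    exact hsQ (hγs ▸ hD γ hmem)
  have hbij : Set.BijOn e PsetD (SD Θ (insert s Q) α) := by
    refine ⟨?_, ?_, ?_⟩
    · rintro ⟨γ, D⟩ ⟨hγG, h0D, hpw, hQD, hsum⟩
      by_cases hz : γ = 0
      · have : e (γ, D) = D := by simp [he, hz]
        rw [this]
        refine ⟨h0D, hpw, fun δ hδ => Finset.mem_insert.2 (Or.inr (hQD δ hδ)), ?_⟩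
        rw [hsum, hz]
        funext i
        simp
      · have hγs : slopeVec Θ γ = s := hGslope γ hγG hz
        have hγD : γ ∉ D := hnotmem hγs hQD
        have : e (γ, D) = insert γ D := by simp [he, hz]
        rw [this]
        refine ⟨?_, ?_, ?_, ?_⟩
        · intro hmem
          rcases Finset.mem_insert.1 hmem with h | h
          · exact hz h.symm
          · exact h0D h
        · rw [Finset.coe_insert]
          haveI : Std.Symm (fun β γ : I → ℕ => slopeVec Θ β ≠ slopeVec Θ γ) :=
            ⟨fun _ _ h => slope_symm Θ h⟩
          apply (Set.pairwise_insert_of_symm (r := fun β γ : I → ℕ => slopeVec Θ β ≠ slopeVec Θ γ)).2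
          refine ⟨hpw, fun δ hδ _ => ?_⟩
          rw [hγs]
          intro hcon
          exact hsQ (hcon ▸ hQD δ hδ)
        · intro δ hδ
          rcases Finset.mem_insert.1 hδ with h | h
          · rw [h, hγs]; exact Finset.mem_insert_self _ _
          · exact Finset.mem_insert.2 (Or.inr (hQD δ h))
        · rw [Finset.sum_insert hγD, hsum]
          have hle : ∀ i, γ i ≤ α i := fun i => hγG.1 i
          funext i
          have := hle i
          simp only [Pi.add_apply, Pi.sub_apply]
          omega
    · rintro ⟨γ1, D1⟩ ⟨h1G, h10, h1pw, h1Q, h1sum⟩ ⟨γ2, D2⟩ ⟨h2G, h20, h2pw, h2Q, h2sum⟩ heq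
      dsimp only at h1G h10 h1pw h1Q h1sum h2G h20 h2pw h2Q h2sum
      simp only [he] at heq
      by_cases hz1 : γ1 = 0 <;> by_cases hz2 : γ2 = 0
      · rw [if_pos hz1, if_pos hz2] at heq
        rw [Prod.ext_iff]
        exact ⟨hz1.trans hz2.symm, heq⟩
      · have h2s := hGslope γ2 h2G hz2
        rw [if_pos hz1, if_neg hz2] at heq
        exfalso
        have : γ2 ∈ D1 := heq ▸ Finset.mem_insert_self γ2 D2
        exact hsQ (h2s ▸ h1Q γ2 this)
      · have h1s := hGslope γ1 h1G hz1
        rw [if_neg hz1, if_pos hz2] at heq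
        exfalso
        have : γ1 ∈ D2 := heq ▸ Finset.mem_insert_self γ1 D1
        exact hsQ (h1s ▸ h2Q γ1 this)
      · have h1s := hGslope γ1 h1G hz1
        have h2s := hGslope γ2 h2G hz2
        rw [if_neg hz1, if_neg hz2] at heq
        have hγ : γ1 = γ2 := by
          have : γ1 ∈ insert γ2 D2 := heq ▸ Finset.mem_insert_self γ1 D1
          rcases Finset.mem_insert.1 this with h | h
          · exact h
          · exact ((hsQ (h1s ▸ h2Q γ1 h))).elim
        have hD : D1 = D2 := by
          have e1 : (insert γ1 D1).erase γ1 = D1 :=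
            Finset.erase_insert (hnotmem h1s h1Q)
          have e2 : (insert γ2 D2).erase γ2 = D2 :=
            Finset.erase_insert (hnotmem h2s h2Q)
          rw [← e1, ← e2, ← hγ, heq, hγ]
        rw [Prod.ext_iff]
        exact ⟨hγ, hD⟩
    · rintro D ⟨h0D, hpw, hQD, hsum⟩
      by_cases hex : ∃ γ ∈ D, slopeVec Θ γ = s
      · obtain ⟨γ, hγD, hγs⟩ := hex
        have hγz : γ ≠ 0 := fun h => h0D (h ▸ hγD)
        have hγle : ∀ i, γ i ≤ α i := fun i => hsum ▸ elem_le_sum hγD i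
        have herase : ∑ δ ∈ D.erase γ, δ = α - γ := by
          have h1 : γ + ∑ δ ∈ D.erase γ, δ = α := by
            have := Finset.add_sum_erase D (fun δ : I → ℕ => δ) hγD
            simpa using this.trans hsum
          funext i
          have h2 := congrFun h1 i
          simp only [Pi.add_apply] at h2
          have h4 := hγle i
          show (∑ δ ∈ D.erase γ, δ) i = α i - γ i
          omega
        refine ⟨(γ, D.erase γ), ⟨⟨fun i => hγle i, Or.inr hγs⟩, ?_, ?_, ?_, herase⟩, ?_⟩
        · exact fun h => h0D (Finset.mem_of_mem_erase h)
        · exact hpw.mono (by simp [Finset.coe_subset])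
        · intro δ hδ
          have hδD := Finset.mem_of_mem_erase hδ
          rcases Finset.mem_insert.1 (hQD δ hδD) with h | h
          · exfalso
            have hne : δ ≠ γ := Finset.ne_of_mem_erase hδ
            exact hpw (Finset.mem_coe.2 hδD) (Finset.mem_coe.2 hγD) hne (h.trans hγs.symm)
          · exact h
        · simp only [he, if_neg hγz]
          exact Finset.insert_erase hγD
      · push_neg at hex
        refine ⟨(0, D), ⟨⟨fun i => Nat.zero_le _, Or.inl rfl⟩, h0D, hpw, ?_, ?_⟩, ?_⟩
        · intro δ hδ
          rcases Finset.mem_insert.1 (hQD δ hδ) with h | h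
          · exact absurd h (hex δ hδ)
          · exact h
        · rw [hsum]; funext i; simp
        · simp [he]
  have h1 : ∑ᶠ p ∈ PsetD, (∑ᶠ u ∈ SM Θ s p.1, wQty r u) * ∏ δ ∈ p.2, mQty' Θ r δ
      = ∑ᶠ D ∈ SD Θ (insert s Q) α, ∏ γ ∈ D, mQty' Θ r γ := by
    apply finsum_mem_eq_of_bijOn e hbij
    rintro ⟨γ, D⟩ ⟨hγG, hDm⟩
    dsimp only at hγG hDm ⊢
    by_cases hz : γ = 0
    · simp only [he, hz, if_pos rfl]
      rw [Mfac_zero, one_mul]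
    · have hγs : slopeVec Θ γ = s := hGslope γ hγG hz
      have hγD : γ ∉ D := hnotmem hγs hDm.2.2.1
      simp only [he, if_neg hz]
      rw [Finset.prod_insert hγD, Mfac_eq_mQty' Θ r hγs]
  rw [← h1]
  have hunion : PsetD = ⋃ γ ∈ G Θ s α, ({γ} : Set (I → ℕ)) ×ˢ SD Θ Q (α - γ) := by
    ext ⟨γ, D⟩
    simp only [Set.mem_iUnion, Set.mem_prod, Set.mem_singleton_iff, hPsetD, Set.mem_setOf_eq]
    constructor
    · rintro ⟨hG, hD⟩
      exact ⟨γ, hG, rfl, hD⟩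
    · rintro ⟨γ', hG, rfl, hD⟩
      exact ⟨hG, hD⟩
  rw [hunion, finsum_mem_biUnion ?pd (finite_G Θ s α)
      (fun γ _ => (Set.finite_singleton γ).prod (finite_SD Θ Q (α - γ)))]
  case pd =>
    intro γ1 _ γ2 _ hne
    simp only [Function.onFun]
    rw [Set.disjoint_left]
    rintro ⟨γ, D⟩ ⟨h1, -⟩ ⟨h2, -⟩
    simp only [Set.mem_singleton_iff] at h1 h2
    exact hne (h1 ▸ h2)
  apply finsum_mem_congr rfl
  intro γ _
  rw [finsum_mem_prod_set (Set.finite_singleton γ) (finite_SD Θ Q (α - γ))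
      (fun γ' => ∑ᶠ u ∈ SM Θ s γ', wQty r u) (fun D => ∏ δ ∈ D, mQty' Θ r δ),
    finsum_mem_singleton]


theorem key (r : (I → ℕ) → ℕ) (Q : Finset ℚ) (α : I → ℕ) :
    ∑ᶠ u ∈ SN Θ Q α, wQty r u = ∑ᶠ D ∈ SD Θ Q α, ∏ γ ∈ D, mQty' Θ r γ := by
  classical
  induction Q using Finset.induction generalizing α with
  | empty =>
    have hsupp : ∀ u ∈ SN Θ (∅ : Finset ℚ) α, u = 0 := by
      rintro u ⟨h0, hv, hs⟩
      apply Finsupp.support_eq_empty.1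
      exact Finset.eq_empty_iff_forall_notMem.2 fun β hβ => by simpa using hs β hβ
    have hDemp : ∀ D ∈ SD Θ (∅ : Finset ℚ) α, D = ∅ := by
      rintro D ⟨h0, hpw, hQ, hsum⟩
      exact Finset.eq_empty_iff_forall_notMem.2 fun γ hγ => by simpa using hQ γ hγ
    by_cases hα : α = 0
    · subst hα
      have h1 : SN Θ (∅ : Finset ℚ) 0 = {0} := by
        ext u
        constructor
        · exact fun hu => hsupp u hu
        · rintro rfl
          exact ⟨rfl, vsum_zero, fun β hβ => absurd hβ (by simp)⟩
      have h2 : SD Θ (∅ : Finset ℚ) 0 = {∅} := by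
        ext D
        constructor
        · exact fun hD => hDemp D hD
        · rintro rfl
          exact ⟨Finset.notMem_empty _, by simp, fun γ hγ => absurd hγ (Finset.notMem_empty _),
            by simp⟩
      rw [h1, h2, finsum_mem_singleton, finsum_mem_singleton, wQty_zero, Finset.prod_empty]
    · have h1 : SN Θ (∅ : Finset ℚ) α = ∅ := by
        ext u
        simp only [Set.mem_empty_iff_false, iff_false]
        intro hu
        have h0 := hsupp u hu
        apply hα
        rw [← hu.2.1, h0, vsum_zero]
      have h2 : SD Θ (∅ : Finset ℚ) α = ∅ := by
        ext D
        simp only [Set.mem_empty_iff_false, iff_false]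
        intro hD
        have h0 := hDemp D hD
        apply hα
        rw [← hD.2.2.2, h0, Finset.sum_empty]
      rw [h1, h2, finsum_mem_empty, finsum_mem_empty]
  | insert a s hsQ ih =>
    rw [stepN Θ r hsQ α, stepD Θ r hsQ α]
    exact finsum_mem_congr rfl fun γ _ => by rw [ih]

end PBWAux


theorem mQty'_eq_mQty {I : Type} [Fintype I] (Θ : I → ℤ) (r : (I → ℕ) → ℕ) (γ : I → ℕ) :
    PBWAux.mQty' Θ r γ = mQty Θ r γ := rfl

/-- The PBW identity: for every nonzero `α`,
`n_α = ∑_D ∏_{γ ∈ D} m_γ`, the sum over all finite sets `D` of nonzero vectors with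
pairwise distinct slopes and `∑_{γ ∈ D} γ = α`. -/
theorem nQty_eq_sum_prod_mQty
    {I : Type} [Fintype I] (Θ : I → ℤ) (r : (I → ℕ) → ℕ)
    (α : I → ℕ) (hα : α ≠ 0) :
    nQty r α =
      ∑ᶠ D ∈ {D : Finset (I → ℕ) | (0 : I → ℕ) ∉ D ∧
          (D : Set (I → ℕ)).Pairwise (fun β γ => slopeVec Θ β ≠ slopeVec Θ γ) ∧
          ∑ γ ∈ D, γ = α},
        ∏ γ ∈ D, mQty Θ r γ := by
  classical
  set Qall : Finset ℚ :=
    Finset.image (slopeVec Θ) ((PBWAux.box α).filter (fun β => β ≠ 0)) with hQall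
  have hS : {u : (I → ℕ) →₀ ℕ | u 0 = 0 ∧ (u.sum fun β n => n • β) = α}
      = PBWAux.SN Θ Qall α := by
    ext u
    constructor
    · rintro ⟨h0, hv⟩
      refine ⟨h0, hv, fun β hβ => ?_⟩
      rw [hQall]
      apply Finset.mem_image_of_mem
      rw [Finset.mem_filter]
      exact ⟨PBWAux.supp_mem_box hv hβ, PBWAux.supp_ne_zero h0 hβ⟩
    · rintro ⟨h0, hv, -⟩
      exact ⟨h0, hv⟩
  have hD : {D : Finset (I → ℕ) | (0 : I → ℕ) ∉ D ∧
      (D : Set (I → ℕ)).Pairwise (fun β γ => slopeVec Θ β ≠ slopeVec Θ γ) ∧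
      ∑ γ ∈ D, γ = α} = PBWAux.SD Θ Qall α := by
    ext D
    constructor
    · rintro ⟨h0, hpw, hsum⟩
      refine ⟨h0, hpw, fun γ hγ => ?_, hsum⟩
      rw [hQall]
      apply Finset.mem_image_of_mem
      rw [Finset.mem_filter]
      refine ⟨?_, fun h => h0 (h ▸ hγ)⟩
      rw [PBWAux.mem_box]
      intro i
      have := PBWAux.elem_le_sum hγ i
      rw [hsum] at this
      exact this
    · rintro ⟨h0, hpw, -, hsum⟩
      exact ⟨h0, hpw, hsum⟩
  have h1 : nQty r α = ∑ᶠ u ∈ PBWAux.SN Θ Qall α, PBWAux.wQty r u := by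
    unfold nQty
    rw [hS]
    rfl
  rw [h1, hD, PBWAux.key Θ r Qall α]
  exact finsum_mem_congr rfl fun D _ =>
    Finset.prod_congr rfl fun γ _ => mQty'_eq_mQty Θ r γ
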